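/- Let y : [t₀,∞) → (0,∞) be differentiable with y'(t) ≤ −C y(t)^{1+1/(q−1)} m^{−q/(q−1)} for constants C, m > 0 and integer q > 2. Then y(t) ≤ min(y(t₀), C'(q,C) (t−t₀)^{−(q−1)} m^q) for all t > t₀. -/

import Mathlib

open Real Set

/-- ODE comparison in the proof of Theorem 4.3: there is `C' = C'(q,C)` such that any
positive differentiable `y` on `[t₀,∞)` with `y' ≤ -C y^{1+1/(q-1)} m^{-q/(q-1)}`
satisfies `y(t) ≤ min(y(t₀), C' (t-t₀)^{-(q-1)} m^q)` for all `t > t₀`. -/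
theorem stmt_17 (q : ℕ) (hq : 2 < q) (C : ℝ) (hC : 0 < C) :
    ∃ C' : ℝ, 0 < C' ∧
      ∀ (m t₀ : ℝ) (y : ℝ → ℝ), 0 < m →
        (∀ t, t₀ ≤ t → 0 < y t) →
        DifferentiableOn ℝ y (Ici t₀) →
        (∀ t, t₀ ≤ t → derivWithin y (Ici t₀) t ≤
          -C * y t ^ ((1 : ℝ) + 1 / ((q : ℝ) - 1)) * m ^ (-(q : ℝ) / ((q : ℝ) - 1))) →
        ∀ t, t₀ < t →
          y t ≤ min (y t₀) (C' * (t - t₀) ^ (-((q : ℝ) - 1)) * m ^ (q : ℕ)) := by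
  have hq2 : (2:ℝ) < (q:ℝ) := by exact_mod_cast hq
  set β : ℝ := (q:ℝ) - 1 with hβ
  have hβ1 : 1 < β := by simp [hβ]; linarith
  have hβ0 : 0 < β := by linarith
  set α : ℝ := 1/β with hα
  have hα0 : 0 < α := by positivity
  refine ⟨(α*C) ^ (-β), Real.rpow_pos_of_pos (by positivity) _, ?_⟩
  intro m t₀ y hm hy hdiff hderiv t ht
  set K : ℝ := α * C * m ^ (-(q:ℝ)/β) with hK
  have hK0 : 0 < K := by
    have := Real.rpow_pos_of_pos hm (-(q:ℝ)/β); positivity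
  -- derivative of g = y ^ (-α)
  set y' : ℝ → ℝ := fun s => derivWithin y (Ici t₀) s with hy'
  have hder : ∀ s ∈ Ici t₀, HasDerivWithinAt y (y' s) (Ici t₀) s := fun s hs =>
    (hdiff s hs).hasDerivWithinAt
  set g : ℝ → ℝ := fun s => y s ^ (-α) with hg
  have hgder : ∀ s ∈ Ici t₀,
      HasDerivWithinAt g (y' s * (-α) * y s ^ (-α - 1)) (Ici t₀) s := by
    intro s hs
    exact (hder s hs).rpow_const (Or.inl (hy s hs).ne')
  -- the derivative of g is ≥ K on Ici t₀
  have hgK : ∀ s ∈ Ici t₀, K ≤ y' s * (-α) * y s ^ (-α - 1) := by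
    intro s hs
    have hys := hy s hs
    have h1 : y s ^ ((1:ℝ) + α) * y s ^ (-α - 1) = 1 := by
      rw [← Real.rpow_add hys, show (1:ℝ) + α + (-α - 1) = 0 by ring, Real.rpow_zero]
    have h2 : y' s ≤ -C * y s ^ ((1:ℝ) + α) * m ^ (-(q:ℝ)/β) := hderiv s hs
    have h3 : (0:ℝ) < y s ^ (-α - 1) := Real.rpow_pos_of_pos hys _
    have h4 : (0:ℝ) < m ^ (-(q:ℝ)/β) := Real.rpow_pos_of_pos hm _
    have := mul_le_mul_of_nonneg_right h2 h3.le
    calc K = α * C * m ^ (-(q:ℝ)/β) * (y s ^ ((1:ℝ) + α) * y s ^ (-α - 1)) := by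
            rw [h1]; ring
      _ = -(α) * (-C * y s ^ ((1:ℝ) + α) * m ^ (-(q:ℝ)/β) * y s ^ (-α - 1)) := by ring
      _ ≤ -(α) * (y' s * y s ^ (-α - 1)) := by
            apply mul_le_mul_of_nonpos_left this (by linarith)
      _ = y' s * (-α) * y s ^ (-α - 1) := by ring
  -- monotonicity of h s = g s - K * s on Ici t₀
  have hcont : ContinuousOn g (Ici t₀) := fun s hs =>
    ((hgder s hs).continuousWithinAt)
  have hmono : MonotoneOn (fun s => g s - K * s) (Ici t₀) := by
    apply monotoneOn_of_hasDerivWithinAt_nonneg (convex_Ici t₀)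
      (f' := fun s => y' s * (-α) * y s ^ (-α - 1) - K)
      (hcont.sub (continuousOn_const.mul continuousOn_id))
    · intro x hx
      rw [interior_Ici] at hx ⊢
      exact ((hgder x (mem_Ici.mpr (le_of_lt hx))).mono Ioi_subset_Ici_self).sub
        (by have h := (hasDerivWithinAt_id x (Ioi t₀)).const_mul K; rw [mul_one] at h; exact h)
    · intro x hx
      rw [interior_Ici] at hx
      have := hgK x (mem_Ici.mpr (le_of_lt hx))
      linarith
  -- antitone of y on Ici t₀
  have hanti : AntitoneOn y (Ici t₀) := by
    apply antitoneOn_of_hasDerivWithinAt_nonpos (convex_Ici t₀)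
      (f' := y') (hdiff.continuousOn)
    · intro x hx
      rw [interior_Ici] at hx ⊢
      exact (hder x (mem_Ici.mpr (le_of_lt hx))).mono Ioi_subset_Ici_self
    · intro x hx
      rw [interior_Ici] at hx
      have h2 := hderiv x (le_of_lt hx)
      have h3 : (0:ℝ) < y x ^ ((1:ℝ) + 1/((q:ℝ)-1)) := Real.rpow_pos_of_pos (hy x hx.le) _
      have h4 : (0:ℝ) < m ^ (-(q:ℝ)/((q:ℝ)-1)) := Real.rpow_pos_of_pos hm _
      nlinarith
  have htt : t₀ ≤ t := ht.le
  -- g t ≥ K * (t - t₀)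
  have hgrow : K * (t - t₀) ≤ g t := by
    have := hmono (self_mem_Ici) (mem_Ici.mpr htt) htt
    have hg0 : 0 < g t₀ := Real.rpow_pos_of_pos (hy t₀ le_rfl) _
    simp only at this
    linarith
  have hgt0 : 0 < K * (t - t₀) := by
    have : 0 < t - t₀ := by linarith
    positivity
  -- y t = g t ^ (-β)
  have hyt : y t = g t ^ (-β) := by
    show y t = (y t ^ (-α)) ^ (-β)
    rw [← Real.rpow_mul (hy t htt).le, show (-α) * (-β) = 1 by rw [hα]; field_simp, Real.rpow_one]
  have key : y t ≤ (α*C) ^ (-β) * (t - t₀) ^ (-β) * m ^ (q:ℕ) := by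
    rw [hyt]
    have h1 : g t ^ (-β) ≤ (K * (t - t₀)) ^ (-β) :=
      Real.rpow_le_rpow_of_nonpos hgt0 hgrow (by linarith)
    refine h1.trans_eq ?_
    rw [Real.mul_rpow hK0.le (by linarith), hK,
      Real.mul_rpow (by positivity) (Real.rpow_pos_of_pos hm _).le,
      ← Real.rpow_mul hm.le,
      show (-(q:ℝ)/β) * (-β) = (q:ℝ) by field_simp,
      Real.rpow_natCast]
    ring
  have hy0 : y t ≤ y t₀ := hanti self_mem_Ici (mem_Ici.mpr htt) htt
  exact le_min hy0 key
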